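/- Logarithmic geometric estimate in the plane: For every R > 0 there exists a constant C > 0, depending only on R, such that for all x, x' ∈ ℝ² and all unit vectors θ, θ' ∈ ℝ² with |θ' × θ| ≠ 0, one has ∫₀^∞ χ(x − tθ) · ( ∫_ℝ χ(x' + sθ') / |x − tθ − (x' + sθ')| ds ) dt ≤ C (1 − log|θ' × θ|), where χ is the indicator function of the closed disk {y ∈ ℝ² : |y| ≤ R} and θ' × θ := θ'₁θ₂ − θ'₂θ₁ (so that 0 < |θ' × θ| ≤ 1 and the right-hand side is positive). -/

import Mathlib

open MeasureTheory

/-- The indicator function of the closed disk of radius `R` in the plane. -/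
noncomputable def chiR (R : ℝ) : EuclideanSpace ℝ (Fin 2) → ℝ :=
  Set.indicator (Metric.closedBall (0 : EuclideanSpace ℝ (Fin 2)) R) fun _ => (1 : ℝ)

section Helpers

open Real intervalIntegral

-- L0: decomposition of |u|^(-1/2)
lemma absrpow_eq (u : ℝ) : |u| ^ (-(1:ℝ)/2) = u ^ (-(1:ℝ)/2) + (-u) ^ (-(1:ℝ)/2) := by
  have hc : Real.cos (-(1:ℝ)/2 * Real.pi) = 0 := by
    rw [show (-(1:ℝ)/2 * Real.pi) = -(Real.pi/2) by ring, Real.cos_neg, Real.cos_pi_div_two]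
  rcases lt_trichotomy u 0 with h | h | h
  · rw [abs_of_neg h, Real.rpow_def_of_neg h, hc, mul_zero, zero_add]
  · simp [h, Real.zero_rpow (by norm_num : (-(1:ℝ)/2) ≠ 0)]
  · rw [abs_of_pos h, Real.rpow_def_of_neg (neg_lt_zero.2 h), hc, mul_zero, add_zero]

lemma sqrtabsinv_eq (u : ℝ) : (Real.sqrt |u|)⁻¹ = |u| ^ (-(1:ℝ)/2) := by
  rw [Real.sqrt_eq_rpow, ← Real.rpow_neg (abs_nonneg u)]
  norm_num

-- L2: interval integrability
lemma intInt_sqrtabsinv (a b : ℝ) :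
    IntervalIntegrable (fun u => (Real.sqrt |u|)⁻¹) volume a b := by
  have h1 : IntervalIntegrable (fun u : ℝ => u ^ (-(1:ℝ)/2)) volume a b :=
    intervalIntegrable_rpow' (by norm_num)
  have h2 : IntervalIntegrable (fun u : ℝ => (-u) ^ (-(1:ℝ)/2)) volume a b := by
    have := (intervalIntegrable_rpow' (a := -a) (b := -b)
      (by norm_num : (-1:ℝ) < -(1:ℝ)/2)).comp_sub_left (c := 0)
    simpa using this
  simpa [funext sqrtabsinv_eq, funext absrpow_eq] using h1.add h2

lemma sqrt_rpow_half (x : ℝ) : x ^ ((1:ℝ)/2) ≤ Real.sqrt x := by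
  rcases le_or_gt 0 x with h | h
  · rw [Real.sqrt_eq_rpow]
  · rw [Real.rpow_def_of_neg h]
    have : Real.cos ((1:ℝ)/2 * Real.pi) = 0 := by
      rw [show ((1:ℝ)/2 * Real.pi) = Real.pi/2 by ring, Real.cos_pi_div_two]
    rw [this, mul_zero]
    exact Real.sqrt_nonneg x

lemma sqrt_sub_le {A B : ℝ} (h : A ≤ B) : B ^ ((1:ℝ)/2) - A ^ ((1:ℝ)/2) ≤ Real.sqrt (B - A) := by
  rcases le_or_gt 0 A with hA | hA
  · have h1 : B ^ ((1:ℝ)/2) = Real.sqrt B := (Real.sqrt_eq_rpow B).symm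
    have h2 : A ^ ((1:ℝ)/2) = Real.sqrt A := (Real.sqrt_eq_rpow A).symm
    rw [h1, h2]
    nlinarith [Real.sq_sqrt hA, Real.sq_sqrt (hA.trans h), Real.sq_sqrt (sub_nonneg.2 h),
      Real.sqrt_nonneg A, Real.sqrt_nonneg B, Real.sqrt_nonneg (B - A)]
  · have h2 : A ^ ((1:ℝ)/2) = 0 := by
      rw [Real.rpow_def_of_neg hA, show ((1:ℝ)/2 * Real.pi) = Real.pi/2 by ring,
        Real.cos_pi_div_two, mul_zero]
    rw [h2, sub_zero]
    calc B ^ ((1:ℝ)/2) ≤ Real.sqrt B := sqrt_rpow_half B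
    _ ≤ Real.sqrt (B - A) := Real.sqrt_le_sqrt (by linarith)

-- L3
lemma int_sqrtabsinv_le {A B : ℝ} (h : A ≤ B) :
    ∫ u in A..B, (Real.sqrt |u|)⁻¹ ≤ 4 * Real.sqrt (B - A) := by
  have h1 : IntervalIntegrable (fun u : ℝ => u ^ (-(1:ℝ)/2)) volume A B :=
    intervalIntegrable_rpow' (by norm_num)
  have h2 : IntervalIntegrable (fun u : ℝ => (-u) ^ (-(1:ℝ)/2)) volume A B := by
    have := (intervalIntegrable_rpow' (a := -A) (b := -B)
      (by norm_num : (-1:ℝ) < -(1:ℝ)/2)).comp_sub_left (c := 0)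
    simpa using this
  have e0 : (fun u : ℝ => (Real.sqrt |u|)⁻¹)
      = fun u => u ^ (-(1:ℝ)/2) + (-u) ^ (-(1:ℝ)/2) := by
    funext u; rw [sqrtabsinv_eq, absrpow_eq]
  rw [e0, intervalIntegral.integral_add h1 h2]
  have v1 : ∫ u in A..B, u ^ (-(1:ℝ)/2) = (B ^ ((1:ℝ)/2) - A ^ ((1:ℝ)/2)) / ((1:ℝ)/2) := by
    have := integral_rpow (a := A) (b := B) (Or.inl (by norm_num : (-1:ℝ) < -(1:ℝ)/2))
    rw [this]; norm_num
  have v2 : ∫ u in A..B, (-u) ^ (-(1:ℝ)/2)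
      = ((-A) ^ ((1:ℝ)/2) - (-B) ^ ((1:ℝ)/2)) / ((1:ℝ)/2) := by
    have e1 : (fun u : ℝ => (-u) ^ (-(1:ℝ)/2)) = fun u => ((fun v : ℝ => v ^ (-(1:ℝ)/2)) (0 - u)) := by
      funext u; norm_num
    rw [e1, intervalIntegral.integral_comp_sub_left (fun v : ℝ => v ^ (-(1:ℝ)/2)) 0]
    have := integral_rpow (a := 0 - B) (b := 0 - A) (Or.inl (by norm_num : (-1:ℝ) < -(1:ℝ)/2))
    rw [this]; norm_num
  rw [v1, v2]
  have b1 := sqrt_sub_le h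
  have b2 : (-A) ^ ((1:ℝ)/2) - (-B) ^ ((1:ℝ)/2) ≤ Real.sqrt (B - A) := by
    have := sqrt_sub_le (neg_le_neg h)
    simpa [neg_sub, sub_neg_eq_add, show -A - -B = B - A by ring] using this
  have hs : (0:ℝ) ≤ Real.sqrt (B - A) := Real.sqrt_nonneg _
  nlinarith

-- L4
lemma neg_log_le {m d : ℝ} (hm : 0 < m) (hd : 0 < d) :
    -Real.log d ≤ -Real.log m + 2 * Real.sqrt m * (Real.sqrt d)⁻¹ := by
  rcases le_or_gt m d with h | h
  · have h1 : Real.log m ≤ Real.log d := Real.log_le_log hm h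
    have h2 : (0:ℝ) ≤ 2 * Real.sqrt m * (Real.sqrt d)⁻¹ := by positivity
    linarith
  · have hmd : 0 < m / d := div_pos hm hd
    have h1 : Real.log (m / d) = 2 * Real.log (Real.sqrt (m / d)) := by
      rw [Real.log_sqrt hmd.le]; ring
    have h2 : Real.log (Real.sqrt (m / d)) ≤ Real.sqrt (m / d) - 1 :=
      Real.log_le_sub_one_of_pos (Real.sqrt_pos.2 hmd)
    have h3 : Real.sqrt (m / d) = Real.sqrt m * (Real.sqrt d)⁻¹ := by
      rw [Real.sqrt_div hm.le, div_eq_mul_inv]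
    have h4 : Real.log (m / d) = Real.log m - Real.log d := Real.log_div hm.ne' hd.ne'
    have h5 : (0:ℝ) ≤ Real.sqrt m * (Real.sqrt d)⁻¹ := by positivity
    nlinarith

lemma maxinv_cont {d : ℝ} (hd : 0 < d) (b : ℝ) :
    Continuous (fun s : ℝ => (max d |s - b|)⁻¹) := by
  apply Continuous.inv₀
  · exact continuous_const.max ((continuous_id.sub continuous_const).abs)
  · intro s; exact ne_of_gt (lt_of_lt_of_le hd (le_max_left _ _))

lemma Vlem {R d : ℝ} (hR : 0 < R) (hd : 0 < d) (b : ℝ) :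
    ∫ s : ℝ, Set.indicator (Set.Icc (b - 2*R) (b + 2*R)) (fun s => (max d |s - b|)⁻¹) s
      ≤ 2 + 2*|Real.log (2*R)| + 2 * max 0 (-Real.log d) := by
  have hcont := maxinv_cont hd b
  have hle : b - 2*R ≤ b + 2*R := by linarith
  -- turn into interval integral
  rw [MeasureTheory.integral_indicator measurableSet_Icc,
    MeasureTheory.integral_Icc_eq_integral_Ioc,
    ← intervalIntegral.integral_of_le hle]
  -- translate
  have e1 : (fun s : ℝ => (max d |s - b|)⁻¹) = fun s => ((fun u : ℝ => (max d |u|)⁻¹) (s - b)) := by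
    funext s; rfl
  rw [e1, intervalIntegral.integral_comp_sub_right (fun u : ℝ => (max d |u|)⁻¹) b]
  have hab : b - 2*R - b = -(2*R) := by ring
  have hab' : b + 2*R - b = 2*R := by ring
  rw [hab, hab']
  have hcont2 : Continuous (fun u : ℝ => (max d |u|)⁻¹) := by
    simpa using maxinv_cont hd 0
  have hii : ∀ a b : ℝ, IntervalIntegrable (fun u : ℝ => (max d |u|)⁻¹) volume a b :=
    fun a b => hcont2.intervalIntegrable a b
  -- split at 0
  rw [← intervalIntegral.integral_add_adjacent_intervals (a := -(2*R)) (b := 0) (c := 2*R)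
    (hii _ _) (hii _ _)]
  -- negative part equals positive part
  have eneg : ∫ u in (-(2*R))..0, (max d |u|)⁻¹ = ∫ u in (0:ℝ)..(2*R), (max d |u|)⁻¹ := by
    have := intervalIntegral.integral_comp_neg (a := -(2*R)) (b := 0) (fun u : ℝ => (max d |u|)⁻¹)
    simp only [abs_neg] at this
    simpa using this
  rw [eneg]
  -- now bound 2 * ∫_0^{2R}
  set d' := min d (2*R) with hd'
  have hd'pos : 0 < d' := lt_min hd (by linarith)
  have hd'le : d' ≤ 2*R := min_le_right _ _
  have hsplit : ∫ u in (0:ℝ)..(2*R), (max d |u|)⁻¹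
      = (∫ u in (0:ℝ)..d', (max d |u|)⁻¹) + ∫ u in d'..(2*R), (max d |u|)⁻¹ :=
    (intervalIntegral.integral_add_adjacent_intervals (hii _ _) (hii _ _)).symm
  have hI1 : ∫ u in (0:ℝ)..d', (max d |u|)⁻¹ ≤ 1 := by
    have hEq : Set.EqOn (fun u : ℝ => (max d |u|)⁻¹) (fun _ => d⁻¹) (Set.uIcc 0 d') := by
      intro u hu
      rw [Set.uIcc_of_le hd'pos.le] at hu
      have h1 : |u| = u := abs_of_nonneg hu.1
      have h2 : u ≤ d := hu.2.trans (min_le_left _ _)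
      simp only [h1, max_eq_left h2]
    rw [intervalIntegral.integral_congr hEq, intervalIntegral.integral_const]
    rw [smul_eq_mul, sub_zero]
    rw [← div_eq_mul_inv]
    exact div_le_one_of_le₀ (min_le_left _ _) hd.le
  have hI2 : ∫ u in d'..(2*R), (max d |u|)⁻¹ ≤ |Real.log (2*R)| + max 0 (-Real.log d) := by
    rcases le_or_gt d (2*R) with hcase | hcase
    · have hdd : d' = d := min_eq_left hcase
      rw [hdd]
      have hEq : Set.EqOn (fun u : ℝ => (max d |u|)⁻¹) (fun u => u⁻¹) (Set.uIcc d (2*R)) := by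
        intro u hu
        rw [Set.uIcc_of_le hcase] at hu
        have h1 : |u| = u := abs_of_nonneg (hd.le.trans hu.1)
        simp only [h1, max_eq_right hu.1]
      rw [intervalIntegral.integral_congr hEq,
        integral_inv (by rw [Set.uIcc_of_le hcase]; intro h; exact absurd h.1 (not_le.2 hd))]
      rw [Real.log_div (by linarith) hd.ne']
      have := le_abs_self (Real.log (2*R))
      have := le_max_right (0:ℝ) (-Real.log d)
      linarith [le_max_right (0:ℝ) (-Real.log d)]
    · have hdd : d' = 2*R := min_eq_right hcase.le
      rw [hdd, intervalIntegral.integral_same]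
      positivity
  rw [hsplit]
  have := abs_nonneg (Real.log (2*R))
  have := le_max_left (0:ℝ) (-Real.log d)
  linarith

noncomputable def perp (v : EuclideanSpace ℝ (Fin 2)) : EuclideanSpace ℝ (Fin 2) := (WithLp.equiv 2 _).symm ![-v 1, v 0]

lemma perp_apply0 (v : EuclideanSpace ℝ (Fin 2)) : perp v 0 = -v 1 := rfl
lemma perp_apply1 (v : EuclideanSpace ℝ (Fin 2)) : perp v 1 = v 0 := rfl

lemma inner_two (v w : EuclideanSpace ℝ (Fin 2)) : @inner ℝ _ _ v w = v 0 * w 0 + v 1 * w 1 := by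
  simp [PiLp.inner_apply, Fin.sum_univ_two, RCLike.inner_apply, mul_comm]

lemma norm_sq_two (v : EuclideanSpace ℝ (Fin 2)) : ‖v‖^2 = v 0 ^ 2 + v 1 ^ 2 := by
  rw [EuclideanSpace.norm_eq]
  rw [Real.sq_sqrt (by positivity)]
  simp [Fin.sum_univ_two, sq_abs]

lemma perp_norm (v : EuclideanSpace ℝ (Fin 2)) (h : ‖v‖ = 1) : ‖perp v‖ = 1 := by
  have h1 : ‖perp v‖^2 = 1 := by
    rw [norm_sq_two, perp_apply0, perp_apply1]
    have := norm_sq_two v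
    rw [h] at this
    nlinarith
  nlinarith [norm_nonneg (perp v)]

lemma inner_perp_self (v : EuclideanSpace ℝ (Fin 2)) : @inner ℝ _ _ v (perp v) = 0 := by
  rw [inner_two, perp_apply0, perp_apply1]; ring

lemma sqrt_le_one_add {a : ℝ} (ha : 0 ≤ a) : Real.sqrt a ≤ 1 + a := by
  nlinarith [Real.sq_sqrt ha, Real.sqrt_nonneg a]

lemma final_combine {Rv K L S : ℝ} (hR : 0 < Rv) (hK : 0 < K) (hL : 0 ≤ L)
    (hS : S ≤ 1 + 2*Rv) :
    (2*Rv)*(K + 2*L) + 16*S ≤ (2*Rv*K + 4*Rv + 16*(1+2*Rv) + 1)*(1+L) := by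
  nlinarith [mul_nonneg hL hK.le, mul_nonneg hL hR.le, mul_nonneg hL (mul_nonneg hR.le hK.le)]

end Helpers

open Real in
/-- Logarithmic geometric estimate in the plane. -/
theorem log_geometric_estimate (R : ℝ) (hR : 0 < R) :
    ∃ C > (0 : ℝ), ∀ x x' θ θ' : EuclideanSpace ℝ (Fin 2),
      ‖θ‖ = 1 → ‖θ'‖ = 1 → θ' 0 * θ 1 - θ' 1 * θ 0 ≠ 0 →
      (∫ t in Set.Ioi (0 : ℝ), chiR R (x - t • θ) *
          ∫ s : ℝ, chiR R (x' + s • θ') / ‖x - t • θ - (x' + s • θ')‖) ≤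
        C * (1 - Real.log |θ' 0 * θ 1 - θ' 1 * θ 0|) := by
  have hchiRnn : ∀ v : EuclideanSpace ℝ (Fin 2), 0 ≤ chiR R v := fun v =>
    Set.indicator_nonneg (fun _ _ => zero_le_one) v
  set K' : ℝ := 2 + 2*|Real.log (2*R)| with hK'
  have hK'pos : 0 < K' := by positivity
  refine ⟨2*R*K' + 4*R + 16*(1+2*R) + 1, by positivity, ?_⟩
  intro x x' θ θ' hθ hθ' hmne
  set m₀ : ℝ := θ' 0 * θ 1 - θ' 1 * θ 0 with hm₀def
  set m : ℝ := |m₀| with hmdef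
  have hmpos : 0 < m := abs_pos.2 hmne
  set n' := perp θ' with hn'
  have hn'norm : ‖n'‖ = 1 := perp_norm θ' hθ'
  have hτ : @inner ℝ _ _ θ n' = m₀ := by
    rw [hn', inner_two, perp_apply0, perp_apply1, hm₀def]; ring
  have hm1 : m ≤ 1 := by
    have h := abs_real_inner_le_norm θ n'
    rw [hθ, hn'norm, hτ] at h
    simpa using h
  set L : ℝ := -Real.log m with hLdef
  have hL : 0 ≤ L := by
    have := Real.log_nonpos (abs_nonneg m₀) hm1
    simp only [hLdef]; linarith
  set t₁ : ℝ := @inner ℝ _ _ x θ with ht₁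
  set c : ℝ := @inner ℝ _ _ (x - x') n' with hc
  set body : ℝ → ℝ := fun t => K' + 2*L + 4*Real.sqrt m * (Real.sqrt |c - t*m₀|)⁻¹ with hbody
  have hbodynn : ∀ t, 0 ≤ body t := by
    intro t
    have h1 : (0:ℝ) ≤ 4*Real.sqrt m * (Real.sqrt |c - t*m₀|)⁻¹ := by positivity
    simp only [hbody]; linarith
  set G : ℝ → ℝ := Set.indicator (Set.Icc (t₁ - R) (t₁ + R)) body with hG
  have hGnn : ∀ t, 0 ≤ G t := fun t => Set.indicator_nonneg (fun u _ => hbodynn u) t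
  set F : ℝ → ℝ := fun t => chiR R (x - t • θ) *
      ∫ s : ℝ, chiR R (x' + s • θ') / ‖x - t • θ - (x' + s • θ')‖ with hF
  have hFnn : ∀ t, 0 ≤ F t := fun t =>
    mul_nonneg (hchiRnn _) (integral_nonneg fun s => div_nonneg (hchiRnn _) (norm_nonneg _))
  -- pointwise key bound
  have key : ∀ t : ℝ, c - t*m₀ ≠ 0 → F t ≤ G t := by
    intro t hne
    set d : ℝ := |c - t*m₀| with hd
    have hdpos : 0 < d := abs_pos.2 hne
    by_cases hy : ‖x - t • θ‖ ≤ R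
    · have hchi1 : chiR R (x - t • θ) = 1 :=
        Set.indicator_of_mem (mem_closedBall_zero_iff.2 hy) _
      have htmem : t ∈ Set.Icc (t₁ - R) (t₁ + R) := by
        have h1 : @inner ℝ _ _ (x - t • θ) θ = t₁ - t := by
          rw [inner_sub_left, real_inner_smul_left, real_inner_self_eq_norm_mul_norm, hθ, ht₁]
          ring
        have h2 : |t₁ - t| ≤ R := by
          have h := abs_real_inner_le_norm (x - t • θ) θ
          rw [hθ, mul_one, h1] at h
          exact h.trans hy
        rw [abs_le] at h2
        exact ⟨by linarith [h2.1, h2.2], by linarith [h2.1, h2.2]⟩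
      set b : ℝ := @inner ℝ _ _ (x - t • θ - x') θ' with hbdef
      have hpt : ∀ s : ℝ, chiR R (x' + s • θ') / ‖x - t • θ - (x' + s • θ')‖ ≤
          Set.indicator (Set.Icc (b - 2*R) (b + 2*R)) (fun s => (max d |s - b|)⁻¹) s := by
        intro s
        by_cases hp : ‖x' + s • θ'‖ ≤ R
        · set v := x - t • θ - (x' + s • θ') with hv
          have hv1 : @inner ℝ _ _ v θ' = b - s := by
            have hve : v = (x - t • θ - x') - s • θ' := by rw [hv]; abel
            rw [hve, inner_sub_left, real_inner_smul_left,
              real_inner_self_eq_norm_mul_norm, hθ', hbdef]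
            ring
          have hv2 : @inner ℝ _ _ v n' = c - t*m₀ := by
            have hve : v = (x - x') - t • θ - s • θ' := by rw [hv]; abel
            rw [hve, inner_sub_left, inner_sub_left, real_inner_smul_left,
              real_inner_smul_left, hτ, hn', inner_perp_self, hc]
            ring
          have hb1 : |b - s| ≤ ‖v‖ := by
            have h := abs_real_inner_le_norm v θ'
            rwa [hθ', mul_one, hv1] at h
          have hb2 : d ≤ ‖v‖ := by
            have h := abs_real_inner_le_norm v n'
            rwa [hn'norm, mul_one, hv2, ← hd] at h
          have hb3 : ‖v‖ ≤ 2*R := by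
            have := norm_sub_le (x - t • θ) (x' + s • θ')
            rw [← hv] at this
            linarith
          have hsmem : s ∈ Set.Icc (b - 2*R) (b + 2*R) := by
            have : |s - b| ≤ 2*R := by rw [abs_sub_comm]; linarith
            rw [abs_le] at this
            exact ⟨by linarith [this.1, this.2], by linarith [this.1, this.2]⟩
          rw [Set.indicator_of_mem hsmem]
          have hchi : chiR R (x' + s • θ') = 1 :=
            Set.indicator_of_mem (mem_closedBall_zero_iff.2 hp) _
          rw [hchi]
          have hmax : max d |s - b| ≤ ‖v‖ := max_le hb2 (by rwa [abs_sub_comm])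
          have hmaxpos : 0 < max d |s - b| := lt_of_lt_of_le hdpos (le_max_left _ _)
          rw [one_div]
          exact inv_anti₀ hmaxpos hmax
        · have hchi0 : chiR R (x' + s • θ') = 0 :=
            Set.indicator_of_notMem (fun hmem => hp (mem_closedBall_zero_iff.1 hmem)) _
          rw [hchi0, zero_div]
          exact Set.indicator_nonneg (fun u _ => by positivity) s
      have hInd : Integrable
          (Set.indicator (Set.Icc (b - 2*R) (b + 2*R)) (fun s => (max d |s - b|)⁻¹)) volume :=
        ((maxinv_cont hdpos b).integrableOn_Icc).integrable_indicator measurableSet_Icc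
      have hinner : (∫ s : ℝ, chiR R (x' + s • θ') / ‖x - t • θ - (x' + s • θ')‖) ≤
          K' + 2*L + 4*Real.sqrt m * (Real.sqrt d)⁻¹ := by
        have h1 := integral_mono_of_nonneg
          (ae_of_all _ fun s => div_nonneg (hchiRnn _) (norm_nonneg _)) hInd (ae_of_all _ hpt)
        have h2 := Vlem hR hdpos b
        have h4 : max 0 (-Real.log d) ≤ L + 2*Real.sqrt m * (Real.sqrt d)⁻¹ := by
          apply max_le
          · have : (0:ℝ) ≤ 2*Real.sqrt m * (Real.sqrt d)⁻¹ := by positivity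
            linarith
          · exact neg_log_le hmpos hdpos
        rw [hK']
        calc (∫ s : ℝ, chiR R (x' + s • θ') / ‖x - t • θ - (x' + s • θ')‖) ≤ _ := h1
          _ ≤ 2 + 2*|Real.log (2*R)| + 2 * max 0 (-Real.log d) := h2
          _ ≤ 2 + 2*|Real.log (2*R)| + 2*L + 4*Real.sqrt m * (Real.sqrt d)⁻¹ := by linarith
          _ = _ := by ring
      have hGt : G t = body t := Set.indicator_of_mem htmem _
      rw [hGt]
      have hFt : F t = ∫ s : ℝ, chiR R (x' + s • θ') / ‖x - t • θ - (x' + s • θ')‖ := by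
        rw [hF]; simp only [hchi1, one_mul]
      rw [hFt, hbody]
      exact hinner
    · have hchi0 : chiR R (x - t • θ) = 0 :=
        Set.indicator_of_notMem (fun hmem => hy (mem_closedBall_zero_iff.1 hmem)) _
      have hFt : F t = 0 := by rw [hF]; simp only [hchi0, zero_mul]
      rw [hFt]
      exact hGnn t
  -- integrability of the W-part
  have hWint : ∀ a b : ℝ, IntervalIntegrable
      (fun t : ℝ => (Real.sqrt |c - t*m₀|)⁻¹) volume a b := by
    intro a b
    have h1 : IntervalIntegrable (fun u : ℝ => (Real.sqrt |c - u|)⁻¹) volume (a*m₀) (b*m₀) := by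
      have := (intInt_sqrtabsinv (c - a*m₀) (c - b*m₀)).comp_sub_left c
      simpa using this
    have h2 := h1.comp_mul_right (c := m₀)
    have e : (fun t : ℝ => (Real.sqrt |c - t*m₀|)⁻¹)
        = fun t : ℝ => (fun u : ℝ => (Real.sqrt |c - u|)⁻¹) (t * m₀) := rfl
    rw [e]
    have ha : a*m₀/m₀ = a := by field_simp
    have hb : b*m₀/m₀ = b := by field_simp
    rwa [ha, hb] at h2
  have hbodyint : IntervalIntegrable body volume (t₁ - R) (t₁ + R) := by
    have h1 : IntervalIntegrable (fun _ : ℝ => K' + 2*L) volume (t₁ - R) (t₁ + R) :=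
      intervalIntegrable_const
    have h2 := (hWint (t₁ - R) (t₁ + R)).const_mul (4*Real.sqrt m)
    have := h1.add h2
    simpa only [hbody, mul_assoc] using this
  have hGint : Integrable G volume := by
    rw [hG]
    exact ((intervalIntegrable_iff_integrableOn_Icc_of_le (by linarith)).1
      hbodyint).integrable_indicator measurableSet_Icc
  -- a.e. bound
  have hae : ∀ᵐ t : ℝ ∂volume, F t ≤ G t := by
    rw [ae_iff]
    refine measure_mono_null (fun t ht => ?_) (measure_singleton (c / m₀))
    simp only [Set.mem_setOf_eq] at ht
    simp only [Set.mem_singleton_iff]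
    by_contra hne
    apply ht
    apply key
    intro h0
    apply hne
    field_simp
    linarith [sub_eq_zero.1 h0]
  have step1 : (∫ t in Set.Ioi (0:ℝ), F t) ≤ ∫ t in Set.Ioi (0:ℝ), G t :=
    integral_mono_of_nonneg (ae_of_all _ hFnn) (hGint.restrict) (ae_restrict_of_ae hae)
  have step2 : (∫ t in Set.Ioi (0:ℝ), G t) ≤ ∫ t, G t :=
    setIntegral_le_integral hGint (ae_of_all _ hGnn)
  set J : ℝ := ∫ t in (t₁ - R)..(t₁ + R), (Real.sqrt |c - t*m₀|)⁻¹ with hJ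
  have step3 : (∫ t, G t) = (2*R) * (K' + 2*L) + 4*Real.sqrt m * J := by
    rw [hG, MeasureTheory.integral_indicator measurableSet_Icc,
      MeasureTheory.integral_Icc_eq_integral_Ioc,
      ← intervalIntegral.integral_of_le (by linarith : t₁ - R ≤ t₁ + R)]
    have h1 : IntervalIntegrable (fun _ : ℝ => K' + 2*L) volume (t₁ - R) (t₁ + R) :=
      intervalIntegrable_const
    have h2 := (hWint (t₁ - R) (t₁ + R)).const_mul (4*Real.sqrt m)
    have e : ∫ t in (t₁ - R)..(t₁ + R), body t
        = (∫ _t in (t₁ - R)..(t₁ + R), (K' + 2*L))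
          + ∫ t in (t₁ - R)..(t₁ + R), (4*Real.sqrt m) * (Real.sqrt |c - t*m₀|)⁻¹ := by
      rw [← intervalIntegral.integral_add h1 h2]
    rw [e, intervalIntegral.integral_const, intervalIntegral.integral_const_mul, ← hJ]
    simp only [smul_eq_mul]
    ring
  have step4 : J ≤ 4 * Real.sqrt (2*R*m) / m := by
    have e1 : (fun t : ℝ => (Real.sqrt |c - t*m₀|)⁻¹)
        = fun t : ℝ => (fun u : ℝ => (Real.sqrt |c - u|)⁻¹) (m₀ * t) := by
      funext t; rw [mul_comm]
    rw [hJ, e1, intervalIntegral.integral_comp_mul_left (fun u : ℝ => (Real.sqrt |c - u|)⁻¹) hmne,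
      intervalIntegral.integral_comp_sub_left (fun w : ℝ => (Real.sqrt |w|)⁻¹) c]
    rcases lt_or_gt_of_ne hmne with hneg | hpos
    · have hord : c - m₀ * (t₁ - R) ≤ c - m₀ * (t₁ + R) := by nlinarith
      rw [intervalIntegral.integral_symm (c - m₀ * (t₁ - R)) (c - m₀ * (t₁ + R)), smul_eq_mul]
      have hT := int_sqrtabsinv_le hord
      have hms : m = -m₀ := by rw [hmdef, abs_of_neg hneg]
      have heq : (c - m₀ * (t₁ + R)) - (c - m₀ * (t₁ - R)) = 2*R*m := by
        rw [hms]; ring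
      rw [heq] at hT
      have hrw : m₀⁻¹ * -(∫ u in (c - m₀ * (t₁ - R))..(c - m₀ * (t₁ + R)), (Real.sqrt |u|)⁻¹)
          = (∫ u in (c - m₀ * (t₁ - R))..(c - m₀ * (t₁ + R)), (Real.sqrt |u|)⁻¹) / m := by
        rw [hms, div_neg, div_eq_mul_inv]; ring
      rw [hrw]
      exact div_le_div_of_nonneg_right hT hmpos.le
    · have hord : c - m₀ * (t₁ + R) ≤ c - m₀ * (t₁ - R) := by nlinarith
      have hT := int_sqrtabsinv_le hord
      have hms : m = m₀ := by rw [hmdef, abs_of_pos hpos]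
      have heq : (c - m₀ * (t₁ - R)) - (c - m₀ * (t₁ + R)) = 2*R*m := by
        rw [hms]; ring
      rw [heq] at hT
      rw [smul_eq_mul]
      calc m₀⁻¹ * ∫ u in (c - m₀ * (t₁ + R))..(c - m₀ * (t₁ - R)), (Real.sqrt |u|)⁻¹
          ≤ m₀⁻¹ * (4 * Real.sqrt (2*R*m)) := by
            apply mul_le_mul_of_nonneg_left hT (by positivity)
        _ = 4 * Real.sqrt (2*R*m) / m := by rw [← hms]; field_simp
  have hsqm : Real.sqrt m * Real.sqrt m = m := Real.mul_self_sqrt hmpos.le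
  have hfin : 4*Real.sqrt m * J ≤ 16 * Real.sqrt (2*R) := by
    have h1 : 4*Real.sqrt m * J ≤ 4*Real.sqrt m * (4 * Real.sqrt (2*R*m) / m) :=
      mul_le_mul_of_nonneg_left step4 (by positivity)
    have h2 : Real.sqrt (2*R*m) = Real.sqrt (2*R) * Real.sqrt m :=
      Real.sqrt_mul (by positivity) m
    rw [h2] at h1
    have h3 : 4*Real.sqrt m * (4 * (Real.sqrt (2*R) * Real.sqrt m) / m) = 16 * Real.sqrt (2*R) := by
      rw [show 4*Real.sqrt m * (4 * (Real.sqrt (2*R) * Real.sqrt m) / m)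
          = 16 * Real.sqrt (2*R) * ((Real.sqrt m * Real.sqrt m)/m) from by ring,
        hsqm, div_self hmpos.ne', mul_one]
    linarith [h1, h3.le]
  have hsqR : Real.sqrt (2*R) ≤ 1 + 2*R := sqrt_le_one_add (by positivity)
  have hRHS : 1 - Real.log m = 1 + L := by rw [hLdef]; ring
  rw [hRHS]
  calc (∫ t in Set.Ioi (0:ℝ), F t) ≤ ∫ t, G t := step1.trans step2
    _ = (2*R) * (K' + 2*L) + 4*Real.sqrt m * J := step3
    _ ≤ (2*R) * (K' + 2*L) + 16 * Real.sqrt (2*R) := by linarith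
    _ ≤ (2*R*K' + 4*R + 16*(1+2*R) + 1) * (1 + L) := final_combine hR hK'pos hL hsqR
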